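/- Let h > 0, ν > 0, let k be a nonzero integer, and let s ∈ ℂ with s ≠ 0. Let ξ be a positive real satisfying (4/h²)·sinh²(ξh/2) = k², and let γ ∈ ℂ satisfy Re(γ) > 0 and (4/h²)·sinh²(γh/2) = s/ν + k². Let C_p ∈ ℂ, and define sequences U, V, P : ℕ → ℂ by U_j = −(i k C_p/s)·(exp(−ξ j h) − exp(−γ j h)), V_j = (sinh(ξh)·C_p/(h s))·(exp(−ξ j h) − exp(−γ j h)), and P_j = C_p·exp(−ξ j h). Then U_0 = V_0 = 0, and for every j ≥ 1: s·U_j = −i k·P_j − ν k²·U_j + ν·D₊D₋U_j; s·V_j = −D₀P_j − ν k²·V_j + ν·D₊D₋V_j; and −k²·P_j + D₊D₋P_j = 0. -/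

import Mathlib

open Complex

private lemma sinh_sq_key (z : ℂ) :
    Complex.exp z - 2 + Complex.exp (-z) = 4 * Complex.sinh (z / 2) ^ 2 := by
  have h3 : Complex.exp (z / 2) * Complex.exp (-(z / 2)) = 1 := by
    rw [← Complex.exp_add]; simp
  have h4 : (2 * Complex.sinh (z / 2)) ^ 2
      = (Complex.exp (z / 2) - Complex.exp (-(z / 2))) ^ 2 := by
    rw [Complex.two_sinh]
  have h1 : Complex.exp z = Complex.exp (z / 2) * Complex.exp (z / 2) := by
    rw [← Complex.exp_add]; ring_nf
  have h2 : Complex.exp (-z) = Complex.exp (-(z / 2)) * Complex.exp (-(z / 2)) := by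
    rw [← Complex.exp_add]; ring_nf
  rw [h1, h2]
  linear_combination 2 * h3 - h4

private lemma alg1 (s ν h kk ii Cp d E F A A' B B' : ℂ) (hν : ν ≠ 0) (hh : h ≠ 0)
    (hd : s * d = ii * kk * Cp)
    (hA : A' - 2 + A = kk ^ 2 * h ^ 2) (hB : B' - 2 + B = (s / ν + kk ^ 2) * h ^ 2) :
    s * (-d * (E - F)) =
      -ii * kk * (Cp * E) - ν * kk ^ 2 * (-d * (E - F))
        + ν * ((-d * (E * A - F * B) - 2 * (-d * (E - F))
            + -d * (E * A' - F * B')) / h ^ 2) := by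
  have hA' : A' = kk ^ 2 * h ^ 2 + 2 - A := by linear_combination hA
  have hB2 : B' = (s / ν + kk ^ 2) * h ^ 2 + 2 - B := by linear_combination hB
  subst hA' hB2
  have t1 : ν * ((-d * (E * A - F * B) - 2 * (-d * (E - F))
      + -d * (E * (kk ^ 2 * h ^ 2 + 2 - A)
        - F * ((s / ν + kk ^ 2) * h ^ 2 + 2 - B))) / h ^ 2)
      = -d * (ν * kk ^ 2 * E - (s + ν * kk ^ 2) * F) := by
    field_simp
    ring
  rw [t1]
  linear_combination (-E) * hd

private lemma alg2 (s ν h kk g Cp E F A A' B B' : ℂ) (hν : ν ≠ 0) (hh : h ≠ 0)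
    (hA : A' - 2 + A = kk ^ 2 * h ^ 2) (hB : B' - 2 + B = (s / ν + kk ^ 2) * h ^ 2)
    (hD0 : -((Cp * (E * A) - Cp * (E * A')) / (2 * h)) = s * (g * E)) :
    s * (g * (E - F)) =
      -((Cp * (E * A) - Cp * (E * A')) / (2 * h)) - ν * kk ^ 2 * (g * (E - F))
        + ν * ((g * (E * A - F * B) - 2 * (g * (E - F))
            + g * (E * A' - F * B')) / h ^ 2) := by
  rw [hD0]
  have hA' : A' = kk ^ 2 * h ^ 2 + 2 - A := by linear_combination hA
  have hB2 : B' = (s / ν + kk ^ 2) * h ^ 2 + 2 - B := by linear_combination hB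
  subst hA' hB2
  have t1 : ν * ((g * (E * A - F * B) - 2 * (g * (E - F))
      + g * (E * (kk ^ 2 * h ^ 2 + 2 - A)
        - F * ((s / ν + kk ^ 2) * h ^ 2 + 2 - B))) / h ^ 2)
      = g * (ν * kk ^ 2 * E - (s + ν * kk ^ 2) * F) := by
    field_simp
    ring
  rw [t1]
  ring

private lemma alg3 (h kk Cp E A A' : ℂ) (hh : h ≠ 0)
    (hA : A' - 2 + A = kk ^ 2 * h ^ 2) :
    -kk ^ 2 * (Cp * E) + (Cp * (E * A) - 2 * (Cp * E) + Cp * (E * A')) / h ^ 2 = 0 := by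
  have hA' : A' = kk ^ 2 * h ^ 2 + 2 - A := by linear_combination hA
  subst hA'
  have t1 : (Cp * (E * A) - 2 * (Cp * E) + Cp * (E * (kk ^ 2 * h ^ 2 + 2 - A))) / h ^ 2
      = kk ^ 2 * (Cp * E) := by
    field_simp
    ring
  rw [t1]
  ring

theorem stmt_1 (h ν : ℝ) (hh : 0 < h) (hν : 0 < ν)
    (k : ℤ) (hk : k ≠ 0) (s : ℂ) (hs : s ≠ 0)
    (ξ : ℝ) (hξpos : 0 < ξ)
    (hξ : (4 / h ^ 2) * (Real.sinh (ξ * h / 2)) ^ 2 = (k : ℝ) ^ 2)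
    (γ : ℂ) (hγre : 0 < γ.re)
    (hγ : (4 / (h : ℂ) ^ 2) * (Complex.sinh (γ * (h : ℂ) / 2)) ^ 2 = s / (ν : ℂ) + (k : ℂ) ^ 2)
    (Cp : ℂ) (U V P : ℕ → ℂ)
    (hU : ∀ j : ℕ, U j = -(Complex.I * (k : ℂ) * Cp / s) *
      (Complex.exp (-(ξ : ℂ) * (j : ℂ) * (h : ℂ)) - Complex.exp (-γ * (j : ℂ) * (h : ℂ))))
    (hV : ∀ j : ℕ, V j = ((Real.sinh (ξ * h) : ℂ) * Cp / ((h : ℂ) * s)) *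
      (Complex.exp (-(ξ : ℂ) * (j : ℂ) * (h : ℂ)) - Complex.exp (-γ * (j : ℂ) * (h : ℂ))))
    (hP : ∀ j : ℕ, P j = Cp * Complex.exp (-(ξ : ℂ) * (j : ℂ) * (h : ℂ))) :
    U 0 = 0 ∧ V 0 = 0 ∧
    ∀ j : ℕ, 1 ≤ j →
      (s * U j = -Complex.I * (k : ℂ) * P j - (ν : ℂ) * (k : ℂ) ^ 2 * U j
          + (ν : ℂ) * ((U (j + 1) - 2 * U j + U (j - 1)) / (h : ℂ) ^ 2)) ∧
      (s * V j = -((P (j + 1) - P (j - 1)) / (2 * (h : ℂ))) - (ν : ℂ) * (k : ℂ) ^ 2 * V j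
          + (ν : ℂ) * ((V (j + 1) - 2 * V j + V (j - 1)) / (h : ℂ) ^ 2)) ∧
      (-(k : ℂ) ^ 2 * P j + (P (j + 1) - 2 * P j + P (j - 1)) / (h : ℂ) ^ 2 = 0) := by
  have hh0 : (h : ℂ) ≠ 0 := by exact_mod_cast hh.ne'
  have hν0 : (ν : ℂ) ≠ 0 := by exact_mod_cast hν.ne'
  refine ⟨by simp [hU 0], by simp [hV 0], ?_⟩
  intro j hj
  set A : ℂ := Complex.exp (-((ξ : ℂ) * h)) with hAdef
  set A' : ℂ := Complex.exp ((ξ : ℂ) * h) with hA'def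
  set B : ℂ := Complex.exp (-(γ * h)) with hBdef
  set B' : ℂ := Complex.exp (γ * h) with hB'def
  set E : ℂ := Complex.exp (-(ξ : ℂ) * (j : ℂ) * h) with hEdef
  set F : ℂ := Complex.exp (-γ * (j : ℂ) * h) with hFdef
  have hA : A' - 2 + A = (k : ℂ) ^ 2 * h ^ 2 := by
    have hr : 4 * Real.sinh (ξ * h / 2) ^ 2 = (k : ℝ) ^ 2 * h ^ 2 := by
      field_simp at hξ; rw [mul_comm h ξ] at hξ; linarith [hξ]
    have hc : (4 : ℂ) * Complex.sinh ((ξ : ℂ) * h / 2) ^ 2 = (k : ℂ) ^ 2 * h ^ 2 := by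
      exact_mod_cast hr
    have := sinh_sq_key ((ξ : ℂ) * h)
    rw [hA'def, hAdef]
    linear_combination this + hc
  have hB : B' - 2 + B = (s / ν + (k : ℂ) ^ 2) * h ^ 2 := by
    have hc : (4 : ℂ) * Complex.sinh (γ * h / 2) ^ 2 = (s / ν + (k : ℂ) ^ 2) * h ^ 2 := by
      field_simp at hγ ⊢; linear_combination hγ
    have := sinh_sq_key (γ * h)
    rw [hB'def, hBdef]
    linear_combination this + hc
  have hsh : (Real.sinh (ξ * h) : ℂ) = (A' - A) / 2 := by
    rw [Complex.ofReal_sinh, hA'def, hAdef]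
    rw [show Complex.sinh ((ξ * h : ℝ) : ℂ)
        = (Complex.exp ((ξ * h : ℝ) : ℂ) - Complex.exp (-((ξ * h : ℝ) : ℂ))) / 2 from rfl]
    push_cast
    ring_nf
  have eEp : Complex.exp (-(ξ : ℂ) * ((j + 1 : ℕ) : ℂ) * h) = E * A := by
    rw [hEdef, hAdef, ← Complex.exp_add]
    push_cast
    ring_nf
  have eEm : Complex.exp (-(ξ : ℂ) * ((j - 1 : ℕ) : ℂ) * h) = E * A' := by
    rw [hEdef, hA'def, ← Complex.exp_add, Nat.cast_sub hj, Nat.cast_one]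
    ring_nf
  have eFp : Complex.exp (-γ * ((j + 1 : ℕ) : ℂ) * h) = F * B := by
    rw [hFdef, hBdef, ← Complex.exp_add]
    push_cast
    ring_nf
  have eFm : Complex.exp (-γ * ((j - 1 : ℕ) : ℂ) * h) = F * B' := by
    rw [hFdef, hB'def, ← Complex.exp_add, Nat.cast_sub hj, Nat.cast_one]
    ring_nf
  refine ⟨?_, ?_, ?_⟩
  · rw [hU j, hU (j + 1), hU (j - 1), hP j, eEp, eEm, eFp, eFm]
    refine alg1 s ν h (k : ℂ) Complex.I Cp _ E F A A' B B' hν0 hh0 ?_ hA hB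
    field_simp
  · rw [hV j, hV (j + 1), hV (j - 1), hP (j + 1), hP (j - 1), eEp, eEm, eFp, eFm]
    refine alg2 s ν h (k : ℂ) _ Cp E F A A' B B' hν0 hh0 hA hB ?_
    rw [hsh]
    field_simp
    ring
  · rw [hP j, hP (j + 1), hP (j - 1), eEp, eEm]
    exact alg3 h (k : ℂ) Cp E A A' hh0 hA
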